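/- For the type-B stabilizing correction method applied to the test equation, the stability function is r_B = 1 + z + (1/2+ν)z²/ϖ - ν z²/ϖ² + (1/2 - θ + ν)θ z³/ϖ², where ν = θκμ₂, provided the order-two conditions (order2bb),(order2b) hold; moreover if additionally b̂₂ = â₃₂ and the conditions (order2a) hold, then ν = θ and r_B = 1 + z + (1/2+θ)z²/ϖ - θ z²/ϖ² + (θ/2) z³/ϖ². -/

import Mathlib

open Finset

lemma rec_prod (s : ℕ) (θ : ℝ) (z f : ℕ → ℂ) (c : ℂ)
    (h : ∀ j, 1 ≤ j → j ≤ s → f j = f (j-1) + (θ:ℂ) * z j * (f j - c)) :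
    ∀ j, j ≤ s → (f j - c) * ∏ i ∈ Finset.Icc 1 j, (1 - (θ:ℂ) * z i) = f 0 - c := by
  intro j
  induction j with
  | zero => simp
  | succ n ih =>
    intro hns
    have hrec := h (n+1) (by omega) hns
    simp only [Nat.add_sub_cancel] at hrec
    rw [Finset.prod_Icc_succ_top (by omega : 1 ≤ n + 1)]
    have key : (f (n+1) - c) * (1 - (θ:ℂ) * z (n+1)) = f n - c := by
      linear_combination hrec
    calc (f (n+1) - c) * ((∏ i ∈ Finset.Icc 1 n, (1 - (θ:ℂ) * z i)) * (1 - (θ:ℂ)*z (n+1)))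
        = ((f (n+1) - c) * (1 - (θ:ℂ)*z (n+1))) * ∏ i ∈ Finset.Icc 1 n, (1 - (θ:ℂ) * z i) := by ring
      _ = (f n - c) * ∏ i ∈ Finset.Icc 1 n, (1 - (θ:ℂ) * z i) := by rw [key]
      _ = f 0 - c := ih (by omega)

set_option maxHeartbeats 1000000 in
theorem stmt_7 (s : ℕ) (hs : 1 ≤ s) (θ κ a21 ahat21 ahat31 ahat32 b1 b2 μ1 μ2 : ℝ)
    (hθ0 : θ > 0) (hκ0 : κ ≠ 0)
    (hmatch1 : κ = ahat21) (hmatch2 : ahat21 = a21 + θ)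
    (ho1 : b1 + b2 + θ = 1) (ho2 : b2 * κ + θ = 1/2)
    (ho3 : ahat31 + ahat32 = 1)
    (hμ1 : μ1 = (ahat31 - b1)/θ) (hμ2 : μ2 = (ahat32 - b2)/θ)
    (hrel : κ * ahat32 = 1/2 - θ + θ * κ * μ2)
    (z : ℕ → ℂ)
    (hnz : ∀ j, 1 ≤ j → j ≤ s → 1 - (θ : ℂ) * z j ≠ 0)
    (un unp1 : ℂ) (v w : ℕ → ℂ)
    (hv0 : v 0 = un + (κ : ℂ) * (∑ j ∈ Finset.range (s+1), z j) * un)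
    (hv : ∀ j, 1 ≤ j → j ≤ s →
      v j = v (j-1) + (θ : ℂ) * z j * (v j - un))
    (hw0 : w 0 = un + (ahat31 : ℂ) * (∑ j ∈ Finset.range (s+1), z j) * un
      + (ahat32 : ℂ) * (∑ j ∈ Finset.range (s+1), z j) * v s)
    (hw : ∀ j, 1 ≤ j → j ≤ s →
      w j = w (j-1) + (θ : ℂ) * z j *
        (w j - (μ1 : ℂ) * un - (μ2 : ℂ) * v s))
    (hfin : unp1 = un + (b1 : ℂ) * (∑ j ∈ Finset.range (s+1), z j) * un
      + (b2 : ℂ) * (∑ j ∈ Finset.range (s+1), z j) * v s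
      + (θ : ℂ) * (∑ j ∈ Finset.range (s+1), z j) * w s) :
    (unp1 = (1 + (∑ j ∈ Finset.range (s+1), z j)
        + ((1/2 + θ*κ*μ2 : ℝ) : ℂ) * (∑ j ∈ Finset.range (s+1), z j)^2
            / (∏ j ∈ Finset.Icc 1 s, (1 - (θ : ℂ) * z j))
        - ((θ*κ*μ2 : ℝ) : ℂ) * (∑ j ∈ Finset.range (s+1), z j)^2
            / (∏ j ∈ Finset.Icc 1 s, (1 - (θ : ℂ) * z j))^2
        + ((1/2 - θ + θ*κ*μ2 : ℝ) : ℂ) * (θ : ℂ)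
            * (∑ j ∈ Finset.range (s+1), z j)^3
            / (∏ j ∈ Finset.Icc 1 s, (1 - (θ : ℂ) * z j))^2) * un) ∧
    (∀ bhat1 bhat2 : ℝ, ahat31 = bhat1 → ahat32 = bhat2 →
      bhat1 + bhat2 = 1 → bhat2 * κ = 1/2 →
      θ * κ * μ2 = θ ∧
      unp1 = (1 + (∑ j ∈ Finset.range (s+1), z j)
        + ((1/2 + θ : ℝ) : ℂ) * (∑ j ∈ Finset.range (s+1), z j)^2
            / (∏ j ∈ Finset.Icc 1 s, (1 - (θ : ℂ) * z j))
        - (θ : ℂ) * (∑ j ∈ Finset.range (s+1), z j)^2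
            / (∏ j ∈ Finset.Icc 1 s, (1 - (θ : ℂ) * z j))^2
        + ((θ/2 : ℝ) : ℂ) * (∑ j ∈ Finset.range (s+1), z j)^3
            / (∏ j ∈ Finset.Icc 1 s, (1 - (θ : ℂ) * z j))^2) * un) := by
  have hθ : θ ≠ 0 := ne_of_gt hθ0
  set Z := ∑ j ∈ Finset.range (s+1), z j with hZdef
  set P := ∏ j ∈ Finset.Icc 1 s, (1 - (θ:ℂ) * z j) with hPdef
  clear_value Z P
  have hP : P ≠ 0 := by
    rw [hPdef]
    exact Finset.prod_ne_zero_iff.mpr fun i hi =>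
      hnz i (Finset.mem_Icc.mp hi).1 (Finset.mem_Icc.mp hi).2
  -- real coefficient relations
  have hμ1r : μ1 * θ = ahat31 - b1 := by field_simp at hμ1; linarith
  have hμ2r : μ2 * θ = ahat32 - b2 := by field_simp at hμ2; linarith
  have hμ1s : μ1 = 1 - μ2 := by
    have h : (μ1 + μ2) * θ = 1 * θ := by nlinarith [hμ1r, hμ2r]
    have := mul_right_cancel₀ hθ h
    linarith
  have hb2r : κ * b2 = 1/2 - θ := by linarith [ho2, mul_comm κ b2, mul_comm b2 κ]
  -- complex casts
  have hb2c : (κ:ℂ) * (b2:ℂ) = 1/2 - (θ:ℂ) := by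
    have := congrArg (fun x : ℝ => (x:ℂ)) hb2r; push_cast at this; exact this
  have hb1c : (b1:ℂ) = 1 - (b2:ℂ) - (θ:ℂ) := by
    have h := congrArg (fun x : ℝ => (x:ℂ)) (show b1 = 1 - b2 - θ by linarith)
    push_cast at h; exact h
  have hμ1c : (μ1:ℂ) = 1 - (μ2:ℂ) := by exact_mod_cast hμ1s
  have ha32c : (ahat32:ℂ) = (θ:ℂ) * (μ2:ℂ) + (b2:ℂ) := by
    have h := congrArg (fun x : ℝ => (x:ℂ)) (show ahat32 = θ * μ2 + b2 by nlinarith [hμ2r])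
    push_cast at h; exact h
  have ha31c : (ahat31:ℂ) = (θ:ℂ) * (1 - (μ2:ℂ)) + (1 - (b2:ℂ) - (θ:ℂ)) := by
    have h := congrArg (fun x : ℝ => (x:ℂ)) (show ahat31 = θ * (1 - μ2) + (1 - b2 - θ) by nlinarith [hμ1r, hμ1s])
    push_cast at h; exact h
  -- closed forms for v s and w s
  have hvP := rec_prod s θ z v un hv s le_rfl
  rw [← hPdef] at hvP
  have hvs : v s = un + (κ:ℂ) * Z * un / P := by
    field_simp
    linear_combination hvP + hv0
  have hwrec : ∀ j, 1 ≤ j → j ≤ s → w j = w (j-1) + (θ:ℂ) * z j * (w j - ((μ1:ℂ)*un + (μ2:ℂ)*v s)) := by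
    intro j h1 h2
    have := hw j h1 h2
    linear_combination this
  have hwP := rec_prod s θ z w ((μ1:ℂ)*un + (μ2:ℂ)*v s) hwrec s le_rfl
  rw [← hPdef] at hwP
  have hws : w s = (μ1:ℂ)*un + (μ2:ℂ)*v s + (w 0 - ((μ1:ℂ)*un + (μ2:ℂ)*v s))/P := by
    field_simp
    linear_combination hwP
  have main1 : unp1 = (1 + Z + ((1/2 + θ*κ*μ2 : ℝ) : ℂ) * Z^2 / P
        - ((θ*κ*μ2 : ℝ) : ℂ) * Z^2 / P^2
        + ((1/2 - θ + θ*κ*μ2 : ℝ) : ℂ) * (θ : ℂ) * Z^3 / P^2) * un := by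
    rw [hfin, hws, hw0, hvs]
    push_cast
    rw [hb1c, hμ1c, ha31c, ha32c]
    field_simp
    linear_combination ((2*P*Z^2 + 2*(θ:ℂ)*Z^3)*un)*hb2c
  refine ⟨main1, ?_⟩
  intro bhat1 bhat2 h1 h2 h3 h4
  have hν : θ * κ * μ2 = θ := by
    have h5 : θ * μ2 = ahat32 - b2 := by linarith [hμ2r]
    linear_combination κ*h5 + κ*h2 + h4 - ho2
  refine ⟨hν, ?_⟩
  rw [main1, hν]
  have h6 : (1:ℝ)/2 - θ + θ = 1/2 := by ring
  rw [h6]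
  push_cast
  field_simp
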